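/- Let d ≥ 2, Ω ⊆ ℝ^d be open, ε ∈ (0,1/2], r > 0, ν ∈ ℝ^d a unit vector, and let x₀ ∈ ∂Ω be an (ε,r)-good point with respect to ν. Then for every x ∈ Ω ∩ Γ_r(x₀,ε) and every y ∈ ∂Ω ∩ B_r(x₀), setting x* := 2x₀ − x, the following hold: |(x−x₀)·(y−x₀)| ≤ 2ε|x−x₀||y−x₀|; | |x−y|² − |x−x₀|² − |y−x₀|² | ≤ 2ε|x−x₀|² + 2ε|y−x₀|²; | |x*−y|² − |x−x₀|² − |y−x₀|² | ≤ 2ε|x−x₀|² + 2ε|y−x₀|²; and moreover √(1−2ε)·|x−x₀| ≤ d_Ω(x) ≤ |x−x₀|. -/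
import Mathlib


open MeasureTheory Metric Set
open scoped InnerProductSpace

set_option maxHeartbeats 800000

private lemma aux_inner_bound {E : Type*} [NormedAddCommGroup E] [InnerProductSpace ℝ E]
    (ν a b : E) (hν : ‖ν‖ = 1) (ε : ℝ) (hε0 : 0 ≤ ε)
    (ha : (1 - ε ^ 2) * ‖a‖ ^ 2 ≤ ⟪a, ν⟫_ℝ ^ 2) (hb : |⟪b, ν⟫_ℝ| ≤ ε * ‖b‖) :
    |⟪a, b⟫_ℝ| ≤ 2 * ε * (‖a‖ * ‖b‖) := by
  set α := ⟪a, ν⟫_ℝ with hα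
  set β := ⟪b, ν⟫_ℝ with hβ
  have hsplit : ⟪a - α • ν, b - β • ν⟫_ℝ = ⟪a, b⟫_ℝ - α * β := by
    have hν2 : ⟪ν, ν⟫_ℝ = 1 := by
      rw [real_inner_self_eq_norm_sq, hν]; norm_num
    simp only [inner_sub_left, inner_sub_right, real_inner_smul_left,
      real_inner_smul_right, hν2, ← hα, ← hβ]
    have hcb : ⟪ν, b⟫_ℝ = β := by rw [hβ, real_inner_comm]
    rw [hcb]; ring
  have hna : ‖a - α • ν‖ ^ 2 = ‖a‖ ^ 2 - α ^ 2 := by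
    rw [norm_sub_sq_real, inner_smul_right, norm_smul, ← hα]
    simp [hν, Real.norm_eq_abs, mul_pow, sq_abs]
    ring
  have hnb : ‖b - β • ν‖ ^ 2 = ‖b‖ ^ 2 - β ^ 2 := by
    rw [norm_sub_sq_real, inner_smul_right, norm_smul, ← hβ]
    simp [hν, Real.norm_eq_abs, mul_pow, sq_abs]
    ring
  have h1 : ‖a - α • ν‖ ≤ ε * ‖a‖ := by
    have : ‖a - α • ν‖ ^ 2 ≤ (ε * ‖a‖) ^ 2 := by rw [hna]; nlinarith
    exact le_of_pow_le_pow_left₀ two_ne_zero (by positivity) this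
  have h2 : ‖b - β • ν‖ ≤ ‖b‖ := by
    have : ‖b - β • ν‖ ^ 2 ≤ ‖b‖ ^ 2 := by rw [hnb]; nlinarith [sq_nonneg β]
    exact le_of_pow_le_pow_left₀ two_ne_zero (norm_nonneg _) this
  have hCS : |⟪a - α • ν, b - β • ν⟫_ℝ| ≤ ‖a - α • ν‖ * ‖b - β • ν‖ :=
    abs_real_inner_le_norm _ _
  have hαle : |α| ≤ ‖a‖ := by
    have := abs_real_inner_le_norm a ν
    rwa [hν, mul_one] at this
  have key : |⟪a, b⟫_ℝ| ≤ |α| * |β| + ‖a - α • ν‖ * ‖b - β • ν‖ := by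
    calc |⟪a, b⟫_ℝ| = |α * β + ⟪a - α • ν, b - β • ν⟫_ℝ| := by rw [hsplit]; ring_nf
      _ ≤ |α * β| + |⟪a - α • ν, b - β • ν⟫_ℝ| := abs_add_le _ _
      _ ≤ |α| * |β| + ‖a - α • ν‖ * ‖b - β • ν‖ := by rw [abs_mul]; linarith
  calc |⟪a, b⟫_ℝ| ≤ |α| * |β| + ‖a - α • ν‖ * ‖b - β • ν‖ := key
    _ ≤ ‖a‖ * (ε * ‖b‖) + (ε * ‖a‖) * ‖b‖ :=
        add_le_add (mul_le_mul hαle hb (abs_nonneg _) (norm_nonneg a))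
          (mul_le_mul h1 h2 (norm_nonneg _) (by positivity))
    _ = 2 * ε * (‖a‖ * ‖b‖) := by ring

/-- Lemma `distance to boundary in good set`: for an `(ε,r)`-good point `x₀ ∈ ∂Ω` with respect
to a unit vector `ν`, every `x ∈ Ω ∩ Γ_r(x₀,ε)` and `y ∈ ∂Ω ∩ B_r(x₀)` satisfy the stated
near-orthogonality estimates, and `√(1-2ε)‖x-x₀‖ ≤ d_Ω(x) ≤ ‖x-x₀‖`. -/
theorem stmt_0 (d : ℕ) (hd : 2 ≤ d) (Ω : Set (EuclideanSpace ℝ (Fin d))) (hΩ : IsOpen Ω)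
    (ε r : ℝ) (hε : ε ∈ Set.Ioc (0:ℝ) (1/2)) (hr : 0 < r)
    (ν : EuclideanSpace ℝ (Fin d)) (hν : ‖ν‖ = 1)
    (x₀ : EuclideanSpace ℝ (Fin d)) (hx₀ : x₀ ∈ frontier Ω)
    (hgood : ∀ z ∈ frontier Ω ∩ ball x₀ r, |⟪z - x₀, ν⟫_ℝ| ≤ ε * ‖z - x₀‖)
    (x : EuclideanSpace ℝ (Fin d)) (hxΩ : x ∈ Ω)
    (hxΓ : ⟪x - x₀, ν⟫_ℝ < -Real.sqrt (1 - ε ^ 2) * ‖x - x₀‖)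
    (hxB : x ∈ ball x₀ (r / 2))
    (y : EuclideanSpace ℝ (Fin d)) (hy : y ∈ frontier Ω ∩ ball x₀ r) :
    |⟪x - x₀, y - x₀⟫_ℝ| ≤ 2 * ε * (‖x - x₀‖ * ‖y - x₀‖) ∧
    |‖x - y‖ ^ 2 - ‖x - x₀‖ ^ 2 - ‖y - x₀‖ ^ 2| ≤ 2 * ε * ‖x - x₀‖ ^ 2 + 2 * ε * ‖y - x₀‖ ^ 2 ∧
    |‖((2:ℝ) • x₀ - x) - y‖ ^ 2 - ‖x - x₀‖ ^ 2 - ‖y - x₀‖ ^ 2|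
        ≤ 2 * ε * ‖x - x₀‖ ^ 2 + 2 * ε * ‖y - x₀‖ ^ 2 ∧
    Real.sqrt (1 - 2 * ε) * ‖x - x₀‖ ≤ Metric.infDist x Ωᶜ ∧
    Metric.infDist x Ωᶜ ≤ ‖x - x₀‖ := by
  obtain ⟨hε0, hε12⟩ := hε
  have hε2 : (0:ℝ) ≤ 1 - ε ^ 2 := by nlinarith
  -- the key hypothesis on a = x - x₀
  have ha : (1 - ε ^ 2) * ‖x - x₀‖ ^ 2 ≤ ⟪x - x₀, ν⟫_ℝ ^ 2 := by
    have h1 : Real.sqrt (1 - ε ^ 2) * ‖x - x₀‖ ≤ -⟪x - x₀, ν⟫_ℝ := by linarith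
    have h2 : (0:ℝ) ≤ Real.sqrt (1 - ε ^ 2) * ‖x - x₀‖ := by positivity
    have h3 := Real.sq_sqrt hε2
    nlinarith
  -- inner product estimate for arbitrary boundary points in the ball
  have inner_est : ∀ z ∈ frontier Ω ∩ ball x₀ r,
      |⟪x - x₀, z - x₀⟫_ℝ| ≤ 2 * ε * (‖x - x₀‖ * ‖z - x₀‖) := fun z hz =>
    aux_inner_bound ν (x - x₀) (z - x₀) hν ε hε0.le ha (hgood z hz)
  have H1 := inner_est y hy
  have hab : 2 * ‖x - x₀‖ * ‖y - x₀‖ ≤ ‖x - x₀‖ ^ 2 + ‖y - x₀‖ ^ 2 := by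
    nlinarith [sq_nonneg (‖x - x₀‖ - ‖y - x₀‖)]
  have habs := abs_le.1 H1
  refine ⟨H1, ?_, ?_, ?_, ?_⟩
  · have hexp : ‖x - y‖ ^ 2 = ‖x - x₀‖ ^ 2 - 2 * ⟪x - x₀, y - x₀⟫_ℝ + ‖y - x₀‖ ^ 2 := by
      have : x - y = (x - x₀) - (y - x₀) := by abel
      rw [this, norm_sub_sq_real]
    rw [abs_le]; constructor <;> nlinarith
  · have hexp : ‖((2:ℝ) • x₀ - x) - y‖ ^ 2
        = ‖x - x₀‖ ^ 2 + 2 * ⟪x - x₀, y - x₀⟫_ℝ + ‖y - x₀‖ ^ 2 := by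
      have he : ((2:ℝ) • x₀ - x) - y = -((x - x₀) + (y - x₀)) := by
        rw [two_smul]; abel
      rw [he, norm_neg, norm_add_sq_real]
    rw [abs_le]; constructor <;> nlinarith
  · -- lower bound on infDist
    have hΩne : Ω ≠ univ := by
      intro h
      rw [h, frontier_univ] at hx₀
      exact hx₀
    obtain ⟨y', hy'f, hy'd⟩ := exists_mem_frontier_infDist_compl_eq_dist hxΩ hΩne
    have hx₀c : x₀ ∈ Ωᶜ := fun h => (hΩ.inter_frontier_eq ▸ mem_inter h hx₀ : x₀ ∈ (∅ : Set _))
    have hub : Metric.infDist x Ωᶜ ≤ ‖x - x₀‖ := by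
      have := Metric.infDist_le_dist_of_mem (x := x) hx₀c
      rwa [dist_eq_norm] at this
    have hxx₀ : ‖x - x₀‖ < r / 2 := by
      have := mem_ball.1 hxB; rwa [dist_eq_norm] at this
    have hy'ball : y' ∈ ball x₀ r := by
      rw [mem_ball, dist_comm]
      calc dist x₀ y' ≤ dist x₀ x + dist x y' := dist_triangle _ _ _
        _ ≤ dist x₀ x + ‖x - x₀‖ := by rw [← hy'd]; linarith
        _ < r := by rw [dist_comm, dist_eq_norm]; linarith
    have H2 := inner_est y' ⟨hy'f, hy'ball⟩
    have hexp : dist x y' ^ 2 = ‖x - x₀‖ ^ 2 - 2 * ⟪x - x₀, y' - x₀⟫_ℝ + ‖y' - x₀‖ ^ 2 := by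
      have : x - y' = (x - x₀) - (y' - x₀) := by abel
      rw [dist_eq_norm, this, norm_sub_sq_real]
    have h12ε : (0:ℝ) ≤ 1 - 2 * ε := by linarith
    have hsq : Real.sqrt (1 - 2 * ε) ^ 2 = 1 - 2 * ε := Real.sq_sqrt h12ε
    have hkey : (Real.sqrt (1 - 2 * ε) * ‖x - x₀‖) ^ 2 ≤ dist x y' ^ 2 := by
      have habs2 := abs_le.1 H2
      rw [mul_pow, hsq, hexp]
      nlinarith [sq_nonneg (‖y' - x₀‖ - 2 * ε * ‖x - x₀‖), norm_nonneg (x - x₀),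
        norm_nonneg (y' - x₀), sq_nonneg ‖x - x₀‖]
    rw [hy'd]
    exact le_of_pow_le_pow_left₀ two_ne_zero dist_nonneg hkey
  · have hx₀c : x₀ ∈ Ωᶜ := fun h => (hΩ.inter_frontier_eq ▸ mem_inter h hx₀ : x₀ ∈ (∅ : Set _))
    have := Metric.infDist_le_dist_of_mem (x := x) hx₀c
    rwa [dist_eq_norm] at this
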